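/- Let K be a positive integer, α a real skew-symmetric K×K matrix, and T > 0. Let u: [−T,T] × ℝ → ℝ^K be twice continuously differentiable and 2π-periodic in the second variable θ, and let f: [−T,T] × ℝ → ℝ^K be continuous and 2π-periodic in θ, with the pointwise orthogonality ⟨∂_t u, ∂_t² u + ∂_θ² u + 2α·∂_θ u + α²·u − f⟩ = 0 at every point. Define e(t) := ∫₀^{2π} (‖∂_t u(t,θ)‖² − ‖∂_θ u(t,θ) + α·u(t,θ)‖²) dθ. Then |∫_{−T}^{T} e(t) dt − 2·e(0)·T| ≤ 2·‖Du‖_{C⁰}·∫_{−T}^{T} (∫_{−|t|}^{|t|} ∫₀^{2π} ‖f(s,θ)‖ dθ ds) dt, where ‖Du‖_{C⁰} := sup over [−T,T]×ℝ of (‖∂_t u‖² + ‖∂_θ u + α·u‖²)^{1/2}. -/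

import Mathlib

open Real MeasureTheory Set
open scoped Matrix RealInnerProductSpace InnerProductSpace

/-- The action of a `K × K` real matrix on `ℝ^K` (with the Euclidean norm). -/
noncomputable def matAct {K : ℕ} (α : Matrix (Fin K) (Fin K) ℝ)
    (x : EuclideanSpace ℝ (Fin K)) : EuclideanSpace ℝ (Fin K) :=
  Matrix.toEuclideanLin α x

lemma skew_inner {K : ℕ} (α : Matrix (Fin K) (Fin K) ℝ) (hα : αᵀ = -α)
    (x y : EuclideanSpace ℝ (Fin K)) :
    ⟪matAct α x, y⟫_ℝ = -⟪x, matAct α y⟫_ℝ := by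
  have h1 : Matrix.toEuclideanLin αᴴ = LinearMap.adjoint (Matrix.toEuclideanLin α) :=
    Matrix.toEuclideanLin_conjTranspose_eq_adjoint α
  have h2 : αᴴ = αᵀ := by
    ext i j; simp [Matrix.conjTranspose]
  have h3 : ⟪matAct α x, y⟫_ℝ = ⟪x, Matrix.toEuclideanLin αᵀ y⟫_ℝ := by
    rw [← h2, h1]
    exact (LinearMap.adjoint_inner_right _ _ _).symm
  rw [h3, hα]
  simp [matAct]

variable {K : ℕ} {u : ℝ → ℝ → EuclideanSpace ℝ (Fin K)}
  (hu : ContDiff ℝ 2 (Function.uncurry u))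

local notation "E" => EuclideanSpace ℝ (Fin K)
local notation "U" => Function.uncurry u

noncomputable def Pf (u : ℝ → ℝ → EuclideanSpace ℝ (Fin K)) (p : ℝ × ℝ) : EuclideanSpace ℝ (Fin K) :=
  fderiv ℝ (Function.uncurry u) p (1, 0)

noncomputable def Qf (u : ℝ → ℝ → EuclideanSpace ℝ (Fin K)) (p : ℝ × ℝ) : EuclideanSpace ℝ (Fin K) :=
  fderiv ℝ (Function.uncurry u) p (0, 1)

section
include hu

lemma hUdiff : Differentiable ℝ U := hu.differentiable (by norm_num)

lemma hPt (t θ : ℝ) : HasDerivAt (fun s => u s θ) (Pf u (t, θ)) t := by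
  have h1 : HasFDerivAt U (fderiv ℝ U (t, θ)) (t, θ) := ((hUdiff hu) (t, θ)).hasFDerivAt
  have h2 : HasDerivAt (fun s : ℝ => ((s, θ) : ℝ × ℝ)) ((1 : ℝ), (0 : ℝ)) t :=
    (hasDerivAt_id t).prodMk (hasDerivAt_const t θ)
  exact h1.comp_hasDerivAt t h2

lemma hQθ (t θ : ℝ) : HasDerivAt (u t) (Qf u (t, θ)) θ := by
  have h1 : HasFDerivAt U (fderiv ℝ U (t, θ)) (t, θ) := ((hUdiff hu) (t, θ)).hasFDerivAt
  have h2 : HasDerivAt (fun s : ℝ => ((t, s) : ℝ × ℝ)) ((0 : ℝ), (1 : ℝ)) θ :=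
    (hasDerivAt_const θ t).prodMk (hasDerivAt_id θ)
  exact h1.comp_hasDerivAt θ h2

lemma hP1 : ContDiff ℝ 1 (Pf u) :=
  (ContinuousLinearMap.apply ℝ E (((1 : ℝ), (0 : ℝ)) : ℝ × ℝ)).contDiff.comp
    (hu.fderiv_right (le_refl _))

lemma hQ1 : ContDiff ℝ 1 (Qf u) :=
  (ContinuousLinearMap.apply ℝ E (((0 : ℝ), (1 : ℝ)) : ℝ × ℝ)).contDiff.comp
    (hu.fderiv_right (le_refl _))

end

noncomputable def Pt (u : ℝ → ℝ → EuclideanSpace ℝ (Fin K)) (p : ℝ × ℝ) : EuclideanSpace ℝ (Fin K) :=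
  fderiv ℝ (Pf u) p (1, 0)

noncomputable def Pθ (u : ℝ → ℝ → EuclideanSpace ℝ (Fin K)) (p : ℝ × ℝ) : EuclideanSpace ℝ (Fin K) :=
  fderiv ℝ (Pf u) p (0, 1)

noncomputable def Qt (u : ℝ → ℝ → EuclideanSpace ℝ (Fin K)) (p : ℝ × ℝ) : EuclideanSpace ℝ (Fin K) :=
  fderiv ℝ (Qf u) p (1, 0)

noncomputable def Qθ (u : ℝ → ℝ → EuclideanSpace ℝ (Fin K)) (p : ℝ × ℝ) : EuclideanSpace ℝ (Fin K) :=
  fderiv ℝ (Qf u) p (0, 1)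

section
include hu

lemma hPtt (t θ : ℝ) : HasDerivAt (fun s => Pf u (s, θ)) (Pt u (t, θ)) t := by
  have h1 : HasFDerivAt (Pf u) (fderiv ℝ (Pf u) (t, θ)) (t, θ) :=
    (((hP1 hu).differentiable one_ne_zero) (t, θ)).hasFDerivAt
  exact h1.comp_hasDerivAt t ((hasDerivAt_id t).prodMk (hasDerivAt_const t θ))

lemma hPθθ (t θ : ℝ) : HasDerivAt (fun x => Pf u (t, x)) (Pθ u (t, θ)) θ := by
  have h1 : HasFDerivAt (Pf u) (fderiv ℝ (Pf u) (t, θ)) (t, θ) :=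
    (((hP1 hu).differentiable one_ne_zero) (t, θ)).hasFDerivAt
  exact h1.comp_hasDerivAt θ ((hasDerivAt_const θ t).prodMk (hasDerivAt_id θ))

lemma hQtt (t θ : ℝ) : HasDerivAt (fun s => Qf u (s, θ)) (Qt u (t, θ)) t := by
  have h1 : HasFDerivAt (Qf u) (fderiv ℝ (Qf u) (t, θ)) (t, θ) :=
    (((hQ1 hu).differentiable one_ne_zero) (t, θ)).hasFDerivAt
  exact h1.comp_hasDerivAt t ((hasDerivAt_id t).prodMk (hasDerivAt_const t θ))

lemma hQθθ (t θ : ℝ) : HasDerivAt (fun x => Qf u (t, x)) (Qθ u (t, θ)) θ := by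
  have h1 : HasFDerivAt (Qf u) (fderiv ℝ (Qf u) (t, θ)) (t, θ) :=
    (((hQ1 hu).differentiable one_ne_zero) (t, θ)).hasFDerivAt
  exact h1.comp_hasDerivAt θ ((hasDerivAt_const θ t).prodMk (hasDerivAt_id θ))

lemma clairaut (p : ℝ × ℝ) : Pθ u p = Qt u p := by
  have hsym : IsSymmSndFDerivAt ℝ U p := (hu.contDiffAt).isSymmSndFDerivAt (by simp)
  have hD : Differentiable ℝ (fderiv ℝ U) := (hu.fderiv_right (le_refl _)).differentiable one_ne_zero
  have hfP : fderiv ℝ (Pf u) p =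
      (ContinuousLinearMap.apply ℝ E (((1 : ℝ), (0 : ℝ)) : ℝ × ℝ)).comp
        (fderiv ℝ (fderiv ℝ U) p) := by
    exact (((ContinuousLinearMap.apply ℝ E (((1 : ℝ), (0 : ℝ)) : ℝ × ℝ)).hasFDerivAt).comp p
      ((hD p).hasFDerivAt)).fderiv
  have hfQ : fderiv ℝ (Qf u) p =
      (ContinuousLinearMap.apply ℝ E (((0 : ℝ), (1 : ℝ)) : ℝ × ℝ)).comp
        (fderiv ℝ (fderiv ℝ U) p) := by
    exact (((ContinuousLinearMap.apply ℝ E (((0 : ℝ), (1 : ℝ)) : ℝ × ℝ)).hasFDerivAt).comp p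
      ((hD p).hasFDerivAt)).fderiv
  show fderiv ℝ (Pf u) p (0, 1) = fderiv ℝ (Qf u) p (1, 0)
  rw [hfP, hfQ]
  simpa using hsym.eq (0, 1) (1, 0)

end

noncomputable def matActL {K : ℕ} (α : Matrix (Fin K) (Fin K) ℝ) :
    EuclideanSpace ℝ (Fin K) →L[ℝ] EuclideanSpace ℝ (Fin K) :=
  LinearMap.toContinuousLinearMap (Matrix.toEuclideanLin α)

variable (α : Matrix (Fin K) (Fin K) ℝ)

noncomputable def Vf (α : Matrix (Fin K) (Fin K) ℝ) (u : ℝ → ℝ → EuclideanSpace ℝ (Fin K))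
    (p : ℝ × ℝ) : EuclideanSpace ℝ (Fin K) :=
  Qf u p + matActL α (Function.uncurry u p)

noncomputable def Ff (α : Matrix (Fin K) (Fin K) ℝ) (u : ℝ → ℝ → EuclideanSpace ℝ (Fin K))
    (p : ℝ × ℝ) : ℝ :=
  ‖Pf u p‖ ^ 2 - ‖Vf α u p‖ ^ 2

noncomputable def Gf (α : Matrix (Fin K) (Fin K) ℝ) (u : ℝ → ℝ → EuclideanSpace ℝ (Fin K))
    (p : ℝ × ℝ) : ℝ :=
  2 * ⟪Pf u p, Pt u p⟫_ℝ - 2 * ⟪Vf α u p, Qt u p + matActL α (Pf u p)⟫_ℝ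

section
include hu

lemma hVt (t θ : ℝ) :
    HasDerivAt (fun s => Vf α u (s, θ)) (Qt u (t, θ) + matActL α (Pf u (t, θ))) t := by
  have h1 := hQtt hu t θ
  have h2 : HasDerivAt (fun s => matActL α (Function.uncurry u (s, θ)))
      (matActL α (Pf u (t, θ))) t :=
    (matActL α).hasFDerivAt.comp_hasDerivAt t (hPt hu t θ)
  exact h1.add h2

lemma hVθ (t θ : ℝ) :
    HasDerivAt (fun x => Vf α u (t, x)) (Qθ u (t, θ) + matActL α (Qf u (t, θ))) θ := by
  have h1 := hQθθ hu t θ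
  have h2 : HasDerivAt (fun x => matActL α (Function.uncurry u (t, x)))
      (matActL α (Qf u (t, θ))) θ :=
    (matActL α).hasFDerivAt.comp_hasDerivAt θ (hQθ hu t θ)
  exact h1.add h2

lemma hFt (t θ : ℝ) : HasDerivAt (fun s => Ff α u (s, θ)) (Gf α u (t, θ)) t := by
  have h1 : HasDerivAt (fun s => ⟪Pf u (s, θ), Pf u (s, θ)⟫_ℝ)
      (⟪Pf u (t, θ), Pt u (t, θ)⟫_ℝ + ⟪Pt u (t, θ), Pf u (t, θ)⟫_ℝ) t :=
    (hPtt hu t θ).inner ℝ (hPtt hu t θ)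
  have h2 : HasDerivAt (fun s => ⟪Vf α u (s, θ), Vf α u (s, θ)⟫_ℝ)
      (⟪Vf α u (t, θ), Qt u (t, θ) + matActL α (Pf u (t, θ))⟫_ℝ
        + ⟪Qt u (t, θ) + matActL α (Pf u (t, θ)), Vf α u (t, θ)⟫_ℝ) t :=
    (hVt hu α t θ).inner ℝ (hVt hu α t θ)
  have h3 := h1.sub h2
  have e1 : ∀ s : ℝ, ⟪Pf u (s, θ), Pf u (s, θ)⟫_ℝ - ⟪Vf α u (s, θ), Vf α u (s, θ)⟫_ℝ
      = Ff α u (s, θ) := fun s => by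
    rw [real_inner_self_eq_norm_sq, real_inner_self_eq_norm_sq]; rfl
  have h4 : HasDerivAt (fun s => Ff α u (s, θ))
      (⟪Pf u (t, θ), Pt u (t, θ)⟫_ℝ + ⟪Pt u (t, θ), Pf u (t, θ)⟫_ℝ
        - (⟪Vf α u (t, θ), Qt u (t, θ) + matActL α (Pf u (t, θ))⟫_ℝ
          + ⟪Qt u (t, θ) + matActL α (Pf u (t, θ)), Vf α u (t, θ)⟫_ℝ)) t := by
    simpa only [Pi.sub_def, e1] using h3
  have : ⟪Pf u (t, θ), Pt u (t, θ)⟫_ℝ + ⟪Pt u (t, θ), Pf u (t, θ)⟫_ℝ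
        - (⟪Vf α u (t, θ), Qt u (t, θ) + matActL α (Pf u (t, θ))⟫_ℝ
          + ⟪Qt u (t, θ) + matActL α (Pf u (t, θ)), Vf α u (t, θ)⟫_ℝ) = Gf α u (t, θ) := by
    unfold Gf
    rw [real_inner_comm (Pt u (t, θ)) (Pf u (t, θ)),
      real_inner_comm (Qt u (t, θ) + matActL α (Pf u (t, θ))) (Vf α u (t, θ))]
    ring
  rwa [this] at h4

lemma contPf : Continuous (Pf u) := (hP1 hu).continuous
lemma contQf : Continuous (Qf u) := (hQ1 hu).continuous
lemma contPt : Continuous (Pt u) :=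
  ((hP1 hu).continuous_fderiv_apply one_ne_zero).comp (continuous_id.prodMk continuous_const)
lemma contQt : Continuous (Qt u) :=
  ((hQ1 hu).continuous_fderiv_apply one_ne_zero).comp (continuous_id.prodMk continuous_const)
lemma contQθ : Continuous (Qθ u) :=
  ((hQ1 hu).continuous_fderiv_apply one_ne_zero).comp (continuous_id.prodMk continuous_const)
lemma contVf : Continuous (Vf α u) :=
  (contQf hu).add ((matActL α).continuous.comp hu.continuous)
lemma contFf : Continuous (Ff α u) := by
  unfold Ff
  exact (((contPf hu).norm).pow 2).sub (((contVf hu α).norm).pow 2)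
lemma contGf : Continuous (Gf α u) := by
  unfold Gf
  exact (continuous_const.mul ((contPf hu).inner (contPt hu))).sub
    (continuous_const.mul ((contVf hu α).inner
      ((contQt hu).add ((matActL α).continuous.comp (contPf hu)))))

lemma contPθ : Continuous (Pθ u) :=
  ((hP1 hu).continuous_fderiv_apply one_ne_zero).comp (continuous_id.prodMk continuous_const)

end

section
variable (huper : ∀ t : ℝ, Function.Periodic (u t) (2 * Real.pi))
include hu huper

lemma perP (t θ : ℝ) : Pf u (t, θ + 2 * Real.pi) = Pf u (t, θ) := by
  have h1 : (fun s => u s (θ + 2 * Real.pi)) = fun s => u s θ :=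
    funext fun s => huper s θ
  rw [← (hPt hu t (θ + 2 * Real.pi)).deriv, ← (hPt hu t θ).deriv, h1]

lemma perQ (t θ : ℝ) : Qf u (t, θ + 2 * Real.pi) = Qf u (t, θ) := by
  rw [← (hQθ hu t (θ + 2 * Real.pi)).deriv, ← (hQθ hu t θ).deriv]
  rw [← deriv_comp_add_const (f := u t) (a := 2 * Real.pi)]
  congr 1
  exact funext fun x => huper t x

lemma perV (t θ : ℝ) : Vf α u (t, θ + 2 * Real.pi) = Vf α u (t, θ) := by
  unfold Vf
  rw [perQ hu huper t θ]
  congr 2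
  exact huper t θ

lemma hIBP (s : ℝ) :
    (∫ θ in (0:ℝ)..(2 * Real.pi),
      (⟪Vf α u (s, θ), Pθ u (s, θ)⟫_ℝ
        + ⟪Qθ u (s, θ) + matActL α (Qf u (s, θ)), Pf u (s, θ)⟫_ℝ)) = 0 := by
  have hψ : ∀ θ : ℝ, HasDerivAt (fun x => ⟪Vf α u (s, x), Pf u (s, x)⟫_ℝ)
      (⟪Vf α u (s, θ), Pθ u (s, θ)⟫_ℝ
        + ⟪Qθ u (s, θ) + matActL α (Qf u (s, θ)), Pf u (s, θ)⟫_ℝ) θ :=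
    fun θ => (hVθ hu α s θ).inner ℝ (hPθθ hu s θ)
  have hint : IntervalIntegrable (fun θ => ⟪Vf α u (s, θ), Pθ u (s, θ)⟫_ℝ
        + ⟪Qθ u (s, θ) + matActL α (Qf u (s, θ)), Pf u (s, θ)⟫_ℝ)
      MeasureTheory.volume 0 (2 * Real.pi) := by
    apply Continuous.intervalIntegrable
    have c1 : Continuous fun θ : ℝ => ((s, θ) : ℝ × ℝ) :=
      continuous_const.prodMk continuous_id
    exact (((contVf hu α).comp c1).inner ((contPθ hu).comp c1)).add
      ((((contQθ hu).comp c1).add ((matActL α).continuous.comp ((contQf hu).comp c1))).inner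
        ((contPf hu).comp c1))
  rw [intervalIntegral.integral_eq_sub_of_hasDerivAt (fun θ _ => hψ θ) hint]
  have h2π : (2 * Real.pi : ℝ) = 0 + 2 * Real.pi := by ring
  rw [h2π, perV hu α huper s 0, perP hu huper s 0]
  ring

end

lemma L1 {g h : ℝ → ℝ} (t : ℝ) (hg : Continuous g) (hh : Continuous h)
    (hpos : ∀ s, 0 ≤ h s) (hb : ∀ s ∈ Icc (-|t|) |t|, |g s| ≤ h s) :
    |∫ s in (0:ℝ)..t, g s| ≤ ∫ s in (-|t|)..|t|, h s := by
  rcases le_or_gt 0 t with ht | ht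
  · rw [abs_of_nonneg ht]
    calc |∫ s in (0:ℝ)..t, g s| ≤ ∫ s in (0:ℝ)..t, |g s| :=
          intervalIntegral.abs_integral_le_integral_abs ht
      _ ≤ ∫ s in (0:ℝ)..t, h s := by
          apply intervalIntegral.integral_mono_on ht
            (hg.abs.intervalIntegrable 0 t) (hh.intervalIntegrable 0 t)
          intro s hs
          exact hb s ⟨le_trans (neg_nonpos.mpr (abs_nonneg t)) hs.1,
            le_trans hs.2 (le_abs_self t)⟩
      _ ≤ ∫ s in (-t)..t, h s := by
          rw [← intervalIntegral.integral_add_adjacent_intervals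
            (hh.intervalIntegrable (-t) 0) (hh.intervalIntegrable 0 t)]
          have : (0:ℝ) ≤ ∫ s in (-t)..(0:ℝ), h s :=
            intervalIntegral.integral_nonneg (by linarith) (fun s _ => hpos s)
          linarith
  · rw [abs_of_neg ht, neg_neg]
    have habs : |t| = -t := abs_of_neg ht
    have h1 : |∫ s in (0:ℝ)..t, g s| = |∫ s in t..(0:ℝ), g s| := by
      rw [intervalIntegral.integral_symm]; rw [abs_neg]
    calc |∫ s in (0:ℝ)..t, g s| = |∫ s in t..(0:ℝ), g s| := h1
      _ ≤ ∫ s in t..(0:ℝ), |g s| :=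
          intervalIntegral.abs_integral_le_integral_abs ht.le
      _ ≤ ∫ s in t..(0:ℝ), h s := by
          apply intervalIntegral.integral_mono_on ht.le
            (hg.abs.intervalIntegrable t 0) (hh.intervalIntegrable t 0)
          intro s hs
          refine hb s ⟨?_, ?_⟩ <;> rw [habs]
          · linarith [hs.1]
          · linarith [hs.2]
      _ ≤ ∫ s in t..(-t), h s := by
          rw [← intervalIntegral.integral_add_adjacent_intervals
            (hh.intervalIntegrable t 0) (hh.intervalIntegrable 0 (-t))]
          have : (0:ℝ) ≤ ∫ s in (0:ℝ)..(-t), h s :=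
            intervalIntegral.integral_nonneg (by linarith) (fun s _ => hpos s)
          linarith

lemma L2 (e g h2 : ℝ → ℝ) (T : ℝ) (hT : 0 < T)
    (he_deriv : ∀ t : ℝ, HasDerivAt e (g t) t) (hg_cont : Continuous g)
    (hh2_cont : Continuous h2) (hh2_nn : ∀ s, 0 ≤ h2 s)
    (hb : ∀ s ∈ Icc (-T) T, |g s| ≤ h2 s) :
    |(∫ t in (-T)..T, e t) - 2 * (e 0) * T|
      ≤ ∫ t in (-T)..T, (∫ s in (-|t|)..|t|, h2 s) := by
  have heg : ∀ t : ℝ, (∫ s in (0:ℝ)..t, g s) = e t - e 0 := fun t =>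
    intervalIntegral.integral_eq_sub_of_hasDerivAt (fun x _ => he_deriv x)
      (hg_cont.intervalIntegrable 0 t)
  have he_cont : Continuous e := by
    have he : e = fun t => e 0 + ∫ s in (0:ℝ)..t, g s := funext fun t => by
      have := heg t; linarith
    rw [he]
    exact continuous_const.add (intervalIntegral.continuous_primitive
      (fun a b => hg_cont.intervalIntegrable a b) 0)
  have prim2 : Continuous fun x : ℝ => ∫ s in (0:ℝ)..x, h2 s :=
    intervalIntegral.continuous_primitive (fun a b => hh2_cont.intervalIntegrable a b) 0
  have hR : ∀ t : ℝ, (∫ s in (-|t|)..|t|, h2 s)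
      = (∫ s in (0:ℝ)..(|t| : ℝ), h2 s) - (∫ s in (0:ℝ)..(-|t| : ℝ), h2 s) := by
    intro t
    rw [← intervalIntegral.integral_add_adjacent_intervals
      (hh2_cont.intervalIntegrable (-|t|) 0) (hh2_cont.intervalIntegrable 0 |t|)]
    rw [intervalIntegral.integral_symm]
    ring
  have hRcont : Continuous fun t : ℝ => ∫ s in (-|t|)..|t|, h2 s := by
    have : (fun t : ℝ => ∫ s in (-|t|)..|t|, h2 s)
        = fun t : ℝ => (∫ s in (0:ℝ)..(|t| : ℝ), h2 s) - (∫ s in (0:ℝ)..(-|t| : ℝ), h2 s) :=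
      funext hR
    rw [this]
    exact (prim2.comp continuous_abs).sub (prim2.comp continuous_abs.neg)
  have hTT : (-T : ℝ) ≤ T := by linarith
  have hsplit : (∫ t in (-T)..T, (e t - e 0)) = (∫ t in (-T)..T, e t) - 2 * (e 0) * T := by
    rw [intervalIntegral.integral_sub (he_cont.intervalIntegrable _ _)
      (continuous_const.intervalIntegrable _ _), intervalIntegral.integral_const]
    simp only [smul_eq_mul]
    ring
  rw [← hsplit]
  calc |∫ t in (-T)..T, (e t - e 0)| ≤ ∫ t in (-T)..T, |e t - e 0| :=
        intervalIntegral.abs_integral_le_integral_abs hTT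
    _ ≤ ∫ t in (-T)..T, (∫ s in (-|t|)..|t|, h2 s) := by
        apply intervalIntegral.integral_mono_on hTT
          ((he_cont.sub continuous_const).abs.intervalIntegrable _ _)
          (hRcont.intervalIntegrable _ _)
        intro t ht
        simp only [Pi.sub_apply]
        rw [← heg t]
        have htT : |t| ≤ T := abs_le.mpr ⟨ht.1, ht.2⟩
        refine L1 t hg_cont hh2_cont hh2_nn fun s hs => hb s ⟨?_, ?_⟩
        · linarith [hs.1]
        · linarith [hs.2]

/-- Corollary 4.14: the estimate of the radial energy, obtained by integrating
the almost-constancy of `e(t)` over `[−T, T]`. -/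
theorem radial_energy_estimate (K : ℕ) (hK : 0 < K)
    (α : Matrix (Fin K) (Fin K) ℝ) (hα : αᵀ = -α) (T : ℝ) (hT : 0 < T)
    (u f : ℝ → ℝ → EuclideanSpace ℝ (Fin K))
    (hu : ContDiff ℝ 2 (Function.uncurry u))
    (hf : Continuous (Function.uncurry f))
    (huper : ∀ t : ℝ, Function.Periodic (u t) (2 * Real.pi))
    (hfper : ∀ t : ℝ, Function.Periodic (f t) (2 * Real.pi))
    (horth : ∀ t ∈ Icc (-T) T, ∀ θ : ℝ,
      ⟪deriv (fun s => u s θ) t,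
        deriv (deriv fun s => u s θ) t
          + (deriv (deriv (u t)) θ + (2 : ℝ) • matAct α (deriv (u t) θ)
              + matAct α (matAct α (u t θ)))
          - f t θ⟫ = 0)
    (M : ℝ)
    (hM : ∀ t ∈ Icc (-T) T, ∀ θ : ℝ,
      Real.sqrt (‖deriv (fun s => u s θ) t‖ ^ 2
        + ‖deriv (u t) θ + matAct α (u t θ)‖ ^ 2) ≤ M) :
    |(∫ t in (-T)..T, ∫ θ in (0:ℝ)..(2 * Real.pi),
        (‖deriv (fun s => u s θ) t‖ ^ 2 - ‖deriv (u t) θ + matAct α (u t θ)‖ ^ 2))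
      - 2 * (∫ θ in (0:ℝ)..(2 * Real.pi),
          (‖deriv (fun s => u s θ) 0‖ ^ 2
            - ‖deriv (u 0) θ + matAct α (u 0 θ)‖ ^ 2)) * T|
    ≤ 2 * M * ∫ t in (-T)..T,
        (∫ s in (-|t|)..|t|, ∫ θ in (0:ℝ)..(2 * Real.pi), ‖f s θ‖) := by
  have hπ : (0:ℝ) ≤ 2 * Real.pi := by positivity
  have cθ : ∀ s : ℝ, Continuous fun θ : ℝ => ((s, θ) : ℝ × ℝ) := fun s =>
    continuous_const.prodMk continuous_id
  have hPd : ∀ t θ : ℝ, deriv (fun s => u s θ) t = Pf u (t, θ) := fun t θ => (hPt hu t θ).deriv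
  have hQd : ∀ t θ : ℝ, deriv (u t) θ = Qf u (t, θ) := fun t θ => (hQθ hu t θ).deriv
  have hFrw : ∀ t θ : ℝ, ‖deriv (fun s => u s θ) t‖ ^ 2
      - ‖deriv (u t) θ + matAct α (u t θ)‖ ^ 2 = Ff α u (t, θ) := by
    intro t θ; rw [hPd, hQd]; rfl
  simp only [hFrw]
  -- e has derivative g everywhere
  have he_deriv : ∀ t₀ : ℝ, HasDerivAt (fun t => ∫ θ in (0:ℝ)..(2 * Real.pi), Ff α u (t, θ))
      (∫ θ in (0:ℝ)..(2 * Real.pi), Gf α u (t₀, θ)) t₀ := by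
    intro t₀
    obtain ⟨C, hC⟩ := ((isCompact_Icc (a := t₀ - 1) (b := t₀ + 1)).prod
      (isCompact_Icc (a := (0:ℝ)) (b := 2 * Real.pi))).exists_bound_of_continuousOn
      (contGf hu α).continuousOn
    refine (intervalIntegral.hasDerivAt_integral_of_dominated_loc_of_deriv_le
      (F := fun t θ => Ff α u (t, θ)) (F' := fun t θ => Gf α u (t, θ))
      (bound := fun _ => C) (μ := MeasureTheory.volume) (x₀ := t₀)
      (a := 0) (b := 2 * Real.pi) (Metric.ball_mem_nhds t₀ zero_lt_one) ?_ ?_ ?_ ?_ ?_ ?_).2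
    · exact Filter.Eventually.of_forall fun x =>
        (((contFf hu α).comp (cθ x)).aestronglyMeasurable)
    · exact ((contFf hu α).comp (cθ t₀)).intervalIntegrable 0 (2 * Real.pi)
    · exact ((contGf hu α).comp (cθ t₀)).aestronglyMeasurable
    · refine Filter.Eventually.of_forall fun θ hθ x hx => ?_
      apply hC
      rw [Set.uIoc_of_le hπ] at hθ
      simp only [Metric.mem_ball, Real.dist_eq] at hx
      have := abs_lt.mp hx
      exact ⟨⟨by linarith [this.1], by linarith [this.2]⟩, ⟨hθ.1.le, hθ.2⟩⟩
    · exact intervalIntegrable_const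
    · exact Filter.Eventually.of_forall fun θ _ x _ => hFt hu α x θ
  have hg_cont : Continuous fun s : ℝ => ∫ θ in (0:ℝ)..(2 * Real.pi), Gf α u (s, θ) := by
    have hG : Continuous (Function.uncurry fun s θ : ℝ => Gf α u (s, θ)) := by
      have : (Function.uncurry fun s θ : ℝ => Gf α u (s, θ)) = Gf α u := by
        funext p; rfl
      rw [this]; exact contGf hu α
    exact intervalIntegral.continuous_parametric_intervalIntegral_of_continuous' hG 0 (2 * Real.pi)
  -- bound on M
  have hM0 : 0 ≤ M := le_trans (Real.sqrt_nonneg _) (hM 0 ⟨by linarith, by linarith⟩ 0)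
  have hPle : ∀ s ∈ Icc (-T) T, ∀ θ : ℝ, ‖Pf u (s, θ)‖ ≤ M := by
    intro s hs θ
    have h1 := hM s hs θ
    rw [hPd, hQd] at h1
    calc ‖Pf u (s, θ)‖ = Real.sqrt (‖Pf u (s, θ)‖ ^ 2) := by
          rw [Real.sqrt_sq (norm_nonneg _)]
      _ ≤ Real.sqrt (‖Pf u (s, θ)‖ ^ 2 + ‖Qf u (s, θ) + matAct α (u s θ)‖ ^ 2) :=
          Real.sqrt_le_sqrt (le_add_of_nonneg_right (by positivity))
      _ ≤ M := h1
  -- identification of g on [-T,T]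
  have hgs : ∀ s ∈ Icc (-T) T, (∫ θ in (0:ℝ)..(2 * Real.pi), Gf α u (s, θ))
      = 2 * ∫ θ in (0:ℝ)..(2 * Real.pi), ⟪Pf u (s, θ), f s θ⟫_ℝ := by
    intro s hs
    have hpt : ∀ θ : ℝ, Gf α u (s, θ)
        = 2 * ⟪Pf u (s, θ), f s θ⟫_ℝ
          - 2 * (⟪Vf α u (s, θ), Pθ u (s, θ)⟫_ℝ
            + ⟪Qθ u (s, θ) + matActL α (Qf u (s, θ)), Pf u (s, θ)⟫_ℝ) := by
      intro θ
      have horth' := horth s hs θ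
      have hd1 : deriv (deriv fun x => u x θ) s = Pt u (s, θ) := by
        have hh : (deriv fun x => u x θ) = fun x => Pf u (x, θ) :=
          funext fun x => (hPt hu x θ).deriv
        rw [hh]; exact (hPtt hu s θ).deriv
      have hd2 : deriv (deriv (u s)) θ = Qθ u (s, θ) := by
        have hh : deriv (u s) = fun x => Qf u (s, x) := funext fun x => (hQθ hu s x).deriv
        rw [hh]; exact (hQθθ hu s θ).deriv
      rw [hPd, hd1, hd2, hQd] at horth'
      have hAx : ∀ x, matAct α x = matActL α x := fun _ => rfl
      simp only [hAx] at horth'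
      simp only [inner_sub_right, inner_add_right, inner_smul_right] at horth'
      have hskew : ⟪Vf α u (s, θ), matActL α (Pf u (s, θ))⟫_ℝ
          = -(⟪matActL α (Qf u (s, θ)), Pf u (s, θ)⟫_ℝ
              + ⟪matActL α (matActL α (u s θ)), Pf u (s, θ)⟫_ℝ) := by
        have h1 : ⟪matAct α (Vf α u (s, θ)), Pf u (s, θ)⟫_ℝ
            = -⟪Vf α u (s, θ), matAct α (Pf u (s, θ))⟫_ℝ := skew_inner α hα _ _
        have h2 : matActL α (Vf α u (s, θ))
            = matActL α (Qf u (s, θ)) + matActL α (matActL α (u s θ)) := by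
          show matActL α (Qf u (s, θ) + matActL α (u s θ)) = _
          rw [map_add]
        rw [hAx, hAx, h2, inner_add_left] at h1
        linarith
      have c1 : ⟪matActL α (Qf u (s, θ)), Pf u (s, θ)⟫_ℝ
          = ⟪Pf u (s, θ), matActL α (Qf u (s, θ))⟫_ℝ := real_inner_comm _ _
      have c2 : ⟪matActL α (matActL α (u s θ)), Pf u (s, θ)⟫_ℝ
          = ⟪Pf u (s, θ), matActL α (matActL α (u s θ))⟫_ℝ := real_inner_comm _ _
      have c3 : ⟪Qθ u (s, θ), Pf u (s, θ)⟫_ℝ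
          = ⟪Pf u (s, θ), Qθ u (s, θ)⟫_ℝ := real_inner_comm _ _
      unfold Gf
      rw [← clairaut hu (s, θ), inner_add_right, inner_add_left, hskew]
      linarith
    have hint1 : IntervalIntegrable (fun θ => ⟪Pf u (s, θ), f s θ⟫_ℝ)
        MeasureTheory.volume 0 (2 * Real.pi) := by
      apply Continuous.intervalIntegrable
      exact ((contPf hu).comp (cθ s)).inner (hf.comp (cθ s))
    have hint2 : IntervalIntegrable (fun θ => ⟪Vf α u (s, θ), Pθ u (s, θ)⟫_ℝ
          + ⟪Qθ u (s, θ) + matActL α (Qf u (s, θ)), Pf u (s, θ)⟫_ℝ)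
        MeasureTheory.volume 0 (2 * Real.pi) := by
      apply Continuous.intervalIntegrable
      exact (((contVf hu α).comp (cθ s)).inner ((contPθ hu).comp (cθ s))).add
        ((((contQθ hu).comp (cθ s)).add
          ((matActL α).continuous.comp ((contQf hu).comp (cθ s)))).inner
          ((contPf hu).comp (cθ s)))
    calc (∫ θ in (0:ℝ)..(2 * Real.pi), Gf α u (s, θ))
        = ∫ θ in (0:ℝ)..(2 * Real.pi),
            (2 * ⟪Pf u (s, θ), f s θ⟫_ℝ
              - 2 * (⟪Vf α u (s, θ), Pθ u (s, θ)⟫_ℝ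
                + ⟪Qθ u (s, θ) + matActL α (Qf u (s, θ)), Pf u (s, θ)⟫_ℝ)) :=
          intervalIntegral.integral_congr fun θ _ => hpt θ
      _ = 2 * (∫ θ in (0:ℝ)..(2 * Real.pi), ⟪Pf u (s, θ), f s θ⟫_ℝ)
          - 2 * ∫ θ in (0:ℝ)..(2 * Real.pi),
              (⟪Vf α u (s, θ), Pθ u (s, θ)⟫_ℝ
                + ⟪Qθ u (s, θ) + matActL α (Qf u (s, θ)), Pf u (s, θ)⟫_ℝ) := by
          rw [intervalIntegral.integral_sub (hint1.const_mul 2) (hint2.const_mul 2),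
            intervalIntegral.integral_const_mul, intervalIntegral.integral_const_mul]
      _ = 2 * ∫ θ in (0:ℝ)..(2 * Real.pi), ⟪Pf u (s, θ), f s θ⟫_ℝ := by
          rw [hIBP hu α huper s]; ring
  -- the bound |g s| ≤ h2 s
  have hgb : ∀ s ∈ Icc (-T) T, |∫ θ in (0:ℝ)..(2 * Real.pi), Gf α u (s, θ)|
      ≤ 2 * M * ∫ θ in (0:ℝ)..(2 * Real.pi), ‖f s θ‖ := by
    intro s hs
    rw [hgs s hs, abs_mul, abs_two]
    have h1 : |∫ θ in (0:ℝ)..(2 * Real.pi), ⟪Pf u (s, θ), f s θ⟫_ℝ|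
        ≤ ∫ θ in (0:ℝ)..(2 * Real.pi), |⟪Pf u (s, θ), f s θ⟫_ℝ| :=
      intervalIntegral.abs_integral_le_integral_abs hπ
    have h2 : (∫ θ in (0:ℝ)..(2 * Real.pi), |⟪Pf u (s, θ), f s θ⟫_ℝ|)
        ≤ ∫ θ in (0:ℝ)..(2 * Real.pi), M * ‖f s θ‖ := by
      apply intervalIntegral.integral_mono_on hπ
        ((((contPf hu).comp (cθ s)).inner (hf.comp (cθ s))).abs.intervalIntegrable _ _)
        ((continuous_const.mul ((hf.comp (cθ s)).norm)).intervalIntegrable _ _)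
      intro θ _
      calc |⟪Pf u (s, θ), f s θ⟫_ℝ| ≤ ‖Pf u (s, θ)‖ * ‖f s θ‖ := abs_real_inner_le_norm _ _
        _ ≤ M * ‖f s θ‖ := by
            apply mul_le_mul_of_nonneg_right (hPle s hs θ) (norm_nonneg _)
    rw [intervalIntegral.integral_const_mul] at h2
    calc (2:ℝ) * |∫ θ in (0:ℝ)..(2 * Real.pi), ⟪Pf u (s, θ), f s θ⟫_ℝ|
        ≤ 2 * (M * ∫ θ in (0:ℝ)..(2 * Real.pi), ‖f s θ‖) := by linarith
      _ = 2 * M * ∫ θ in (0:ℝ)..(2 * Real.pi), ‖f s θ‖ := by ring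
  -- continuity of h2
  have hk_cont : Continuous fun s : ℝ => ∫ θ in (0:ℝ)..(2 * Real.pi), ‖f s θ‖ := by
    have hG : Continuous (Function.uncurry fun s θ : ℝ => ‖f s θ‖) := by
      have : (Function.uncurry fun s θ : ℝ => ‖f s θ‖)
          = fun p : ℝ × ℝ => ‖Function.uncurry f p‖ := by funext p; rfl
      rw [this]; exact hf.norm
    exact intervalIntegral.continuous_parametric_intervalIntegral_of_continuous' hG 0 (2 * Real.pi)
  have hknn : ∀ s : ℝ, 0 ≤ ∫ θ in (0:ℝ)..(2 * Real.pi), ‖f s θ‖ := fun s =>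
    intervalIntegral.integral_nonneg hπ fun θ _ => norm_nonneg _
  have key := L2 (fun t => ∫ θ in (0:ℝ)..(2 * Real.pi), Ff α u (t, θ))
    (fun s => ∫ θ in (0:ℝ)..(2 * Real.pi), Gf α u (s, θ))
    (fun s => 2 * M * ∫ θ in (0:ℝ)..(2 * Real.pi), ‖f s θ‖) T hT
    he_deriv hg_cont (continuous_const.mul hk_cont)
    (fun s => mul_nonneg (by linarith) (hknn s)) hgb
  refine le_trans key (le_of_eq ?_)
  rw [← intervalIntegral.integral_const_mul]
  apply intervalIntegral.integral_congr
  intro t _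
  exact intervalIntegral.integral_const_mul _ _
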